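/- For the complete bipartite graph K_{p,q} with p, q ≥ 1, γ_I(K_{p,q} ⊙ K_1) = p + q + 1 if p = 1 or q = 1, and γ_I(K_{p,q} ⊙ K_1) = p + q + 2 otherwise. -/

import Mathlib

open SimpleGraph Finset
open scoped Classical

/-- An Italian dominating function: values in {0,1,2}, and every vertex with
value 0 has neighbor values summing to at least 2. -/
def IsItalian {V : Type*} [Fintype V] (G : SimpleGraph V) (f : V → ℕ) : Prop :=
  (∀ v, f v ≤ 2) ∧
    ∀ v, f v = 0 → 2 ≤ ∑ u ∈ Finset.univ.filter (fun w => G.Adj v w), f u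

/-- The Italian domination number: minimum weight of an Italian dominating function. -/
noncomputable def italianDomNumber {V : Type*} [Fintype V] (G : SimpleGraph V) : ℕ :=
  sInf {w | ∃ f : V → ℕ, IsItalian G f ∧ ∑ v, f v = w}

/-- The corona `G ⊙ K₁`: attach one pendant vertex (an `inr` copy) to each vertex of `G`. -/
def coronaK1 {V : Type*} (G : SimpleGraph V) : SimpleGraph (V ⊕ V) :=
  SimpleGraph.fromRel (fun a b =>
    match a, b with
    | Sum.inl u, Sum.inl v => G.Adj u v
    | Sum.inl u, Sum.inr v => u = v
    | Sum.inr u, Sum.inl v => u = v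
    | Sum.inr _, Sum.inr _ => False)

/-- The corona `G ⊙ H`: one copy of `H` per vertex of `G`, each joined to that vertex. -/
def corona {V W : Type*} (G : SimpleGraph V) (H : SimpleGraph W) :
    SimpleGraph (V ⊕ V × W) :=
  SimpleGraph.fromRel (fun a b =>
    match a, b with
    | Sum.inl u, Sum.inl v => G.Adj u v
    | Sum.inl u, Sum.inr p => u = p.1
    | Sum.inr p, Sum.inl v => p.1 = v
    | Sum.inr p, Sum.inr q => p.1 = q.1 ∧ H.Adj p.2 q.2)

section
variable {V : Type*} (G : SimpleGraph V)

lemma corona_adj_inr (v : V) (x : V ⊕ V) :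
    (coronaK1 G).Adj (Sum.inr v) x ↔ x = Sum.inl v := by
  cases x with
  | inl u => simp [coronaK1, SimpleGraph.fromRel_adj, eq_comm]
  | inr u => simp [coronaK1, SimpleGraph.fromRel_adj]

lemma corona_adj_inl_inl (v u : V) :
    (coronaK1 G).Adj (Sum.inl v) (Sum.inl u) ↔ G.Adj v u := by
  constructor
  · rintro ⟨hne, h | h⟩
    · exact h
    · exact h.symm
  · intro h; exact ⟨by simpa using h.ne, Or.inl h⟩

lemma corona_adj_inl_inr (v u : V) :
    (coronaK1 G).Adj (Sum.inl v) (Sum.inr u) ↔ v = u := by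
  simp [coronaK1, SimpleGraph.fromRel_adj, eq_comm]

end
section
variable {V : Type*} [Fintype V] (G : SimpleGraph V)

lemma pendant_filter (v : V) :
    Finset.univ.filter (fun w => (coronaK1 G).Adj (Sum.inr v) w) = {Sum.inl v} := by
  ext x; simp [corona_adj_inr]

lemma pendant_two {f : (V ⊕ V) → ℕ} (hf : IsItalian (coronaK1 G) f) (v : V)
    (h : f (Sum.inr v) = 0) : f (Sum.inl v) = 2 := by
  have h2 := hf.2 _ h
  rw [pendant_filter, Finset.sum_singleton] at h2
  have := hf.1 (Sum.inl v)
  omega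

lemma pair_ge_one {f : (V ⊕ V) → ℕ} (hf : IsItalian (coronaK1 G) f) (v : V) :
    1 ≤ f (Sum.inl v) + f (Sum.inr v) := by
  by_cases h : f (Sum.inr v) = 0
  · rw [pendant_two G hf v h]; omega
  · omega

lemma no_support {f : (V ⊕ V) → ℕ} (hf : IsItalian (coronaK1 G) f) (v : V)
    (h0 : f (Sum.inl v) = 0) (h1 : f (Sum.inr v) ≤ 1)
    (hnb : ∀ w, G.Adj v w → f (Sum.inl w) = 0) : False := by
  have h2 := hf.2 _ h0
  set s := Finset.univ.filter (fun w => (coronaK1 G).Adj (Sum.inl v) w) with hs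
  have hle : ∑ u ∈ s, f u ≤ ∑ u ∈ s, (if u = Sum.inr v then 1 else 0) := by
    apply Finset.sum_le_sum
    intro u hu
    rw [hs, Finset.mem_filter] at hu
    rcases u with w | w
    · rw [corona_adj_inl_inl] at hu
      rw [hnb w hu.2]
      exact Nat.zero_le _
    · rw [corona_adj_inl_inr] at hu
      obtain rfl := hu.2
      simpa using h1
  have hone : ∑ u ∈ s, (if u = Sum.inr v then (1:ℕ) else 0) ≤ 1 := by
    calc ∑ u ∈ s, (if u = Sum.inr v then (1:ℕ) else 0)
        ≤ ∑ u ∈ Finset.univ, (if u = Sum.inr v then (1:ℕ) else 0) :=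
          Finset.sum_le_sum_of_subset (Finset.filter_subset _ _)
      _ ≤ 1 := by simp [Finset.sum_ite_eq']
  omega

lemma total_eq (f : (V ⊕ V) → ℕ) :
    ∑ x, f x = ∑ v, (f (Sum.inl v) + f (Sum.inr v)) := by
  rw [Fintype.sum_sum_type, Finset.sum_add_distrib]

lemma lower_one [Nonempty V] {f : (V ⊕ V) → ℕ} (hf : IsItalian (coronaK1 G) f) :
    Fintype.card V + 1 ≤ ∑ x, f x := by
  by_contra h
  push_neg at h
  rw [total_eq] at h
  have hall : ∀ v, f (Sum.inl v) + f (Sum.inr v) = 1 := by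
    intro v
    by_contra hv
    have h1 := pair_ge_one G hf v
    have hlt : ∑ _v : V, 1 < ∑ v, (f (Sum.inl v) + f (Sum.inr v)) :=
      Finset.sum_lt_sum (fun i _ => pair_ge_one G hf i)
        ⟨v, Finset.mem_univ v, by omega⟩
    simp only [Finset.sum_const, Finset.card_univ, smul_eq_mul, mul_one] at hlt
    omega
  obtain ⟨v⟩ := ‹Nonempty V›
  have h0 : ∀ w, f (Sum.inl w) = 0 := by
    intro w
    have := hall w
    by_cases hw : f (Sum.inr w) = 0
    · have := pendant_two G hf w hw; omega
    · omega
  exact no_support G hf v (h0 v) (by have := hall v; omega) (fun w _ => h0 w)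

end
section
variable {p q : ℕ}

lemma pair_sum_two {p q : ℕ}
    {f : ((Fin p ⊕ Fin q) ⊕ (Fin p ⊕ Fin q)) → ℕ}
    (hf : IsItalian (coronaK1 (completeBipartiteGraph (Fin p) (Fin q))) f)
    (htot : ∑ x, f x ≤ p + q + 1)
    {u₁ u₂ : Fin p ⊕ Fin q} (hne : u₁ ≠ u₂)
    (h1 : 2 ≤ f (Sum.inl u₁) + f (Sum.inr u₁))
    (h2 : 2 ≤ f (Sum.inl u₂) + f (Sum.inr u₂)) : False := by
  set G := completeBipartiteGraph (Fin p) (Fin q)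
  set s : Fin p ⊕ Fin q → ℕ := fun v => f (Sum.inl v) + f (Sum.inr v) with hsdef
  have hsub : ({u₁, u₂} : Finset (Fin p ⊕ Fin q)) ⊆ Finset.univ := Finset.subset_univ _
  have hsplit := (Finset.sum_sdiff (f := s) hsub).symm
  have hpair : ∑ v ∈ ({u₁, u₂} : Finset _), s v = s u₁ + s u₂ :=
    Finset.sum_pair hne
  have hcard : (Finset.univ \ ({u₁, u₂} : Finset (Fin p ⊕ Fin q))).card = p + q - 2 := by
    rw [Finset.card_sdiff_of_subset hsub, Finset.card_pair hne]
    simp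
  have hrest : (Finset.univ \ ({u₁, u₂} : Finset (Fin p ⊕ Fin q))).card ≤
      ∑ v ∈ Finset.univ \ ({u₁, u₂} : Finset _), s v := by
    calc (Finset.univ \ ({u₁, u₂} : Finset (Fin p ⊕ Fin q))).card
        = ∑ _v ∈ Finset.univ \ ({u₁, u₂} : Finset (Fin p ⊕ Fin q)), 1 := by simp
      _ ≤ _ := Finset.sum_le_sum (fun i _ => pair_ge_one _ hf i)
  have htwo : 2 ≤ p + q := by
    have hnt : Nontrivial (Fin p ⊕ Fin q) := ⟨⟨u₁, u₂, hne⟩⟩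
    have := Fintype.one_lt_card (α := Fin p ⊕ Fin q)
    simp at this; omega
  have htot' : ∑ v, s v ≤ p + q + 1 := by
    rw [← total_eq] at *; exact htot
  rw [hsplit] at htot'
  have h1' : 2 ≤ s u₁ := h1
  have h2' : 2 ≤ s u₂ := h2
  omega

end
section
variable {p q : ℕ}

lemma lower_two (hp : 2 ≤ p) (hq : 2 ≤ q)
    {f : ((Fin p ⊕ Fin q) ⊕ (Fin p ⊕ Fin q)) → ℕ}
    (hf : IsItalian (coronaK1 (completeBipartiteGraph (Fin p) (Fin q))) f) :
    p + q + 2 ≤ ∑ x, f x := by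
  by_contra h
  push_neg at h
  have htot : ∑ x, f x ≤ p + q + 1 := by omega
  set G := completeBipartiteGraph (Fin p) (Fin q) with hG
  have hpone : ∀ v : Fin p ⊕ Fin q, f (Sum.inl v) + f (Sum.inr v) ≤ 1 →
      f (Sum.inl v) = 0 ∧ f (Sum.inr v) = 1 := by
    intro v hv
    have h1 := pair_ge_one _ hf v
    by_cases hw : f (Sum.inr v) = 0
    · have := pendant_two _ hf v hw; omega
    · omega
  have key : ∃ v : Fin p ⊕ Fin q, f (Sum.inl v) + f (Sum.inr v) ≤ 1 ∧
      ∀ w, G.Adj v w → f (Sum.inl w) + f (Sum.inr w) ≤ 1 := by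
    have hpnt : Nontrivial (Fin p) := Fin.nontrivial_iff_two_le.mpr hp
    have hqnt : Nontrivial (Fin q) := Fin.nontrivial_iff_two_le.mpr hq
    by_cases ha : ∃ a : Fin p, 2 ≤ f (Sum.inl (Sum.inl a)) + f (Sum.inr (Sum.inl a))
    · obtain ⟨a, ha⟩ := ha
      obtain ⟨a', ha'⟩ := exists_ne a
      refine ⟨Sum.inl a', ?_, ?_⟩
      · by_contra hc; push_neg at hc
        exact pair_sum_two hf htot (by simp [ha']) hc ha
      · intro w hw
        rcases w with a'' | b
        · simp [hG, completeBipartiteGraph] at hw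
        · by_contra hc; push_neg at hc
          exact pair_sum_two hf htot
            (show (Sum.inr b : Fin p ⊕ Fin q) ≠ Sum.inl a by simp) hc ha
    · push_neg at ha
      by_cases hb : ∃ b : Fin q, 2 ≤ f (Sum.inl (Sum.inr b)) + f (Sum.inr (Sum.inr b))
      · obtain ⟨b, hb⟩ := hb
        obtain ⟨b', hb'⟩ := exists_ne b
        refine ⟨Sum.inr b', ?_, ?_⟩
        · by_contra hc; push_neg at hc
          exact pair_sum_two hf htot (by simp [hb']) hc hb
        · intro w hw
          rcases w with a | b''
          · have := ha a; omega
          · simp [hG, completeBipartiteGraph] at hw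
      · push_neg at hb
        refine ⟨Sum.inr ⟨0, by omega⟩, ?_, ?_⟩
        · have := hb ⟨0, by omega⟩; omega
        · intro w hw
          rcases w with a | b
          · have := ha a; omega
          · simp [hG, completeBipartiteGraph] at hw
  obtain ⟨v, hv1, hv2⟩ := key
  obtain ⟨hv0, hv1'⟩ := hpone v hv1
  exact no_support G hf v hv0 (by omega) (fun w hw => (hpone w (hv2 w hw)).1)

end
section
variable {V : Type*} [Fintype V]

lemma two_le_nbr_sum (G : SimpleGraph V) (f : V → ℕ) {v u : V}
    (hadj : G.Adj v u) (hu : f u = 2) :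
    2 ≤ ∑ w ∈ Finset.univ.filter (fun w => G.Adj v w), f w := by
  have hmem : u ∈ Finset.univ.filter (fun w => G.Adj v w) := by simp [hadj]
  calc 2 = f u := hu.symm
    _ ≤ _ := Finset.single_le_sum (fun i _ => Nat.zero_le _) hmem

end

section
variable (p q : ℕ)

lemma upper_left (q : ℕ) :
    ∃ f : ((Fin 1 ⊕ Fin q) ⊕ (Fin 1 ⊕ Fin q)) → ℕ,
      IsItalian (coronaK1 (completeBipartiteGraph (Fin 1) (Fin q))) f ∧
        ∑ x, f x = q + 2 := by
  refine ⟨fun x => match x with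
    | Sum.inl (Sum.inl _) => 2
    | Sum.inl (Sum.inr _) => 0
    | Sum.inr (Sum.inl _) => 0
    | Sum.inr (Sum.inr _) => 1, ⟨?_, ?_⟩, ?_⟩
  · rintro ((a | b) | (a | b)) <;> simp
  · rintro ((a | b) | (a | b)) hv
    · simp at hv
    · exact two_le_nbr_sum _ _ (u := Sum.inl (Sum.inl 0))
        ((corona_adj_inl_inl _ _ _).mpr (Or.inr ⟨rfl, rfl⟩)) rfl
    · exact two_le_nbr_sum _ _ (u := Sum.inl (Sum.inl a)) ((corona_adj_inr _ _ _).mpr rfl) rfl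
    · simp at hv
  · simp [Fintype.sum_sum_type]
    omega

lemma upper_right (p : ℕ) :
    ∃ f : ((Fin p ⊕ Fin 1) ⊕ (Fin p ⊕ Fin 1)) → ℕ,
      IsItalian (coronaK1 (completeBipartiteGraph (Fin p) (Fin 1))) f ∧
        ∑ x, f x = p + 2 := by
  refine ⟨fun x => match x with
    | Sum.inl (Sum.inl _) => 0
    | Sum.inl (Sum.inr _) => 2
    | Sum.inr (Sum.inl _) => 1
    | Sum.inr (Sum.inr _) => 0, ⟨?_, ?_⟩, ?_⟩
  · rintro ((a | b) | (a | b)) <;> simp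
  · rintro ((a | b) | (a | b)) hv
    · exact two_le_nbr_sum _ _ (u := Sum.inl (Sum.inr 0))
        ((corona_adj_inl_inl _ _ _).mpr (Or.inl ⟨rfl, rfl⟩)) rfl
    · simp at hv
    · simp at hv
    · exact two_le_nbr_sum _ _ (u := Sum.inl (Sum.inr b)) ((corona_adj_inr _ _ _).mpr rfl) rfl
  · simp [Fintype.sum_sum_type]
    omega

lemma upper_gen (p q : ℕ) :
    ∃ f : ((Fin (p+1) ⊕ Fin (q+1)) ⊕ (Fin (p+1) ⊕ Fin (q+1))) → ℕ,
      IsItalian (coronaK1 (completeBipartiteGraph (Fin (p+1)) (Fin (q+1)))) f ∧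
        ∑ x, f x = (p+1) + (q+1) + 2 := by
  refine ⟨fun x => match x with
    | Sum.inl (Sum.inl a) => if a = 0 then 2 else 0
    | Sum.inl (Sum.inr b) => if b = 0 then 2 else 0
    | Sum.inr (Sum.inl a) => if a = 0 then 0 else 1
    | Sum.inr (Sum.inr b) => if b = 0 then 0 else 1, ⟨?_, ?_⟩, ?_⟩
  · rintro ((a | b) | (a | b)) <;> dsimp only <;> split <;> omega
  · rintro ((a | b) | (a | b)) hv
    · exact two_le_nbr_sum _ _ (u := Sum.inl (Sum.inr 0))
        ((corona_adj_inl_inl _ _ _).mpr (Or.inl ⟨rfl, rfl⟩)) (by simp)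
    · exact two_le_nbr_sum _ _ (u := Sum.inl (Sum.inl 0))
        ((corona_adj_inl_inl _ _ _).mpr (Or.inr ⟨rfl, rfl⟩)) (by simp)
    · have ha : a = 0 := by dsimp only at hv; by_contra h; simp [h] at hv
      subst ha
      exact two_le_nbr_sum _ _ (u := Sum.inl (Sum.inl 0)) ((corona_adj_inr _ _ _).mpr rfl) (by simp)
    · have hb : b = 0 := by dsimp only at hv; by_contra h; simp [h] at hv
      subst hb
      exact two_le_nbr_sum _ _ (u := Sum.inl (Sum.inr 0)) ((corona_adj_inr _ _ _).mpr rfl) (by simp)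
  · simp only [Fintype.sum_sum_type]
    rw [Fin.sum_univ_succ, Fin.sum_univ_succ, Fin.sum_univ_succ, Fin.sum_univ_succ]
    simp [Fin.succ_ne_zero]
    omega

end
lemma le_italianDomNumber {V : Type*} [Fintype V] (G : SimpleGraph V) (m : ℕ)
    (f₀ : V → ℕ) (hf₀ : IsItalian G f₀)
    (h : ∀ g : V → ℕ, IsItalian G g → m ≤ ∑ v, g v) : m ≤ italianDomNumber G := by
  rw [italianDomNumber]
  apply le_csInf
  · exact ⟨∑ v, f₀ v, f₀, hf₀, rfl⟩
  · rintro w ⟨g, hg, rfl⟩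
    exact h g hg

theorem italian_coronaK1_completeBipartite (p q : ℕ) (hp : 1 ≤ p) (hq : 1 ≤ q) :
    (p = 1 ∨ q = 1 →
      italianDomNumber (coronaK1 (completeBipartiteGraph (Fin p) (Fin q))) = p + q + 1) ∧
    (p ≠ 1 ∧ q ≠ 1 →
      italianDomNumber (coronaK1 (completeBipartiteGraph (Fin p) (Fin q))) = p + q + 2) := by
  constructor
  · rintro (rfl | rfl)
    · obtain ⟨f, hf, hw⟩ := upper_left q
      apply le_antisymm
      · exact Nat.sInf_le ⟨f, hf, by omega⟩
      · apply le_italianDomNumber _ _ f hf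
        intro g hg
        have hne : Nonempty (Fin 1 ⊕ Fin q) := ⟨Sum.inl 0⟩
        have := lower_one _ hg
        simpa [add_comm] using this
    · obtain ⟨f, hf, hw⟩ := upper_right p
      apply le_antisymm
      · exact Nat.sInf_le ⟨f, hf, by omega⟩
      · apply le_italianDomNumber _ _ f hf
        intro g hg
        have hne : Nonempty (Fin p ⊕ Fin 1) := ⟨Sum.inr 0⟩
        have := lower_one _ hg
        simpa using this
  · rintro ⟨hp1, hq1⟩
    obtain ⟨p', rfl⟩ : ∃ p', p = p' + 1 := ⟨p - 1, by omega⟩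
    obtain ⟨q', rfl⟩ : ∃ q', q = q' + 1 := ⟨q - 1, by omega⟩
    obtain ⟨f, hf, hw⟩ := upper_gen p' q'
    apply le_antisymm
    · exact Nat.sInf_le ⟨f, hf, hw⟩
    · apply le_italianDomNumber _ _ f hf
      intro g hg
      exact lower_two (by omega) (by omega) hg
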